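/- Let 𝒜 be a z-filter on an m-admissible subalgebra F of CB(S). Then bar(𝒜) = ⋂_{A∈𝒜°} int(cl ε(A)) = ⋂_{A∈𝒜°} cl ε(A) = ⋂_{A∈𝒜} cl ε(A). -/

import Mathlib

open Set Topology WeakDual BoundedContinuousFunction

noncomputable section

variable (S : Type*) [TopologicalSpace S] [T2Space S] [Semigroup S]

/-- Left translation `λ_s`, as a continuous map, given continuity of left translations. -/
def lamC (hl : ∀ s : S, Continuous (fun t => s * t)) (s : S) : C(S, S) :=
  ⟨fun t => s * t, hl s⟩

/-- An m-admissible subalgebra of `CB(S) = S →ᵇ ℂ`. -/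
structure MAdmissible (hl : ∀ s : S, Continuous (fun t => s * t)) : Type _ where
  carrier : StarSubalgebra ℂ (S →ᵇ ℂ)
  isClosed' : IsClosed (carrier : Set (S →ᵇ ℂ))
  leftInvariant : ∀ (s : S), ∀ f ∈ carrier, f.compContinuous (lamC S hl s) ∈ carrier
  mAdmissible : ∀ (μ : characterSpace ℂ carrier) (f : S →ᵇ ℂ) (hf : f ∈ carrier),
    ∃ g ∈ carrier, ∀ s : S,
      g s = μ ⟨f.compContinuous (lamC S hl s), leftInvariant s f hf⟩

variable {hl : ∀ s : S, Continuous (fun t => s * t)}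

/-- The spectrum `S^F` of an m-admissible subalgebra. -/
abbrev specF (F : MAdmissible S hl) : Type _ := characterSpace ℂ F.carrier

/-- Evaluation at a point, as an algebra homomorphism on `F`. -/
def evalHom (F : MAdmissible S hl) (s : S) : F.carrier →ₐ[ℂ] ℂ where
  toFun f := (f : S →ᵇ ℂ) s
  map_one' := rfl
  map_mul' _ _ := rfl
  map_zero' := rfl
  map_add' _ _ := rfl
  commutes' _ := rfl

/-- The evaluation map `ε : S → S^F`. -/
def epsF (F : MAdmissible S hl) (s : S) : specF S F :=
  haveI : CompleteSpace F.carrier := F.isClosed'.completeSpace_coe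
  CharacterSpace.equivAlgHom.symm (evalHom S F s)

variable (F : MAdmissible S hl)

/-- `Z(F)`: the collection of zero sets of members of `F`. -/
def ZSet : Set (Set S) := {A | ∃ f ∈ F.carrier, A = {s : S | f s = 0}}

/-- z-filters on `F`. -/
def IsZFilter (𝒜 : Set (Set S)) : Prop :=
  𝒜 ⊆ ZSet S F ∧ ∅ ∉ 𝒜 ∧ Set.univ ∈ 𝒜 ∧
    (∀ A ∈ 𝒜, ∀ B ∈ 𝒜, A ∩ B ∈ 𝒜) ∧
    ∀ A ∈ 𝒜, ∀ B ∈ ZSet S F, A ⊆ B → B ∈ 𝒜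

/-- `FS`: the collection of z-ultrafilters on `F`. -/
def zUltra : Set (Set (Set S)) :=
  {p | IsZFilter S F p ∧ ∀ q, IsZFilter S F q → p ⊆ q → q = p}

/-- `cl ε(A)` in `S^F`. -/
def epsCl (A : Set S) : Set (specF S F) := closure (epsF S F '' A)

/-- `⋂_{A ∈ p} cl ε(A)`; for `p ∈ FS` this is the singleton of the corresponding point of `S^F`. -/
def core (p : Set (Set S)) : Set (specF S F) := ⋂ A ∈ p, epsCl S F A

/-- `p̃ = ⋂ [p]`, the intersection of the equivalence class of `p`. -/
def tilde (p : Set (Set S)) : Set (Set S) :=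
  ⋂₀ {q | q ∈ zUltra S F ∧ core S F q = core S F p}

/-- pure z-filters. -/
def IsPure (𝒜 : Set (Set S)) : Prop :=
  IsZFilter S F 𝒜 ∧ ∀ p ∈ zUltra S F, 𝒜 ⊆ p → 𝒜 ⊆ tilde S F p

/-- `bar(𝒜) = {p̃ : 𝒜 ⊆ p}`, viewed as a subset of `S^F` via the identification of
`p̃` with the point `μ` such that `⋂_{A ∈ p} cl ε(A) = {μ}`. -/
def barSet (𝒜 : Set (Set S)) : Set (specF S F) :=
  {μ | ∃ p ∈ zUltra S F, 𝒜 ⊆ p ∧ core S F p = {μ}}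

/-- `𝒜° = {A ∈ 𝒜 : bar(𝒜) ⊆ int cl ε(A)}`. -/
def circA (𝒜 : Set (Set S)) : Set (Set S) :=
  {A ∈ 𝒜 | barSet S F 𝒜 ⊆ interior (epsCl S F A)}

/-- `⋂ J`, the intersection of the z-filters `p̃` corresponding to points of `J ⊆ S^F`. -/
def interOf (J : Set (specF S F)) : Set (Set S) :=
  ⋂₀ {C | ∃ p ∈ zUltra S F, ∃ μ ∈ J, core S F p = {μ} ∧ C = tilde S F p}

/-- `⋂ [p̃]_R` for a relation `r` on `S^F`. -/
def classInter (r : specF S F → specF S F → Prop) (μ : specF S F) : Set (Set S) :=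
  interOf S F {ν | r μ ν}

/-- `Ω_ℬ(A) = {x ∈ S : λ_x⁻¹(A) ∈ ℬ}`. -/
def OmegaZ (ℬ : Set (Set S)) (A : Set S) : Set S := {x : S | (fun t => x * t) ⁻¹' A ∈ ℬ}

/-- `𝒜 + ℬ`. -/
def zsum (𝒜 ℬ : Set (Set S)) : Set (Set S) :=
  {A ∈ ZSet S F | ∀ F' ∈ ZSet S F, OmegaZ S ℬ A ⊆ F' → F' ∈ 𝒜}

/-- `𝒜 ⊙ ℬ = ⋂ bar(𝒜 + ℬ)`. -/
def odot (𝒜 ℬ : Set (Set S)) : Set (Set S) :=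
  interOf S F (barSet S F (zsum S F 𝒜 ℬ))

/-- topological choice functions for a set `Γ` of z-filters. -/
def IsTCF (Γ : Set (Set (Set S))) (f : Set (Set S) → Set S) : Prop :=
  ∀ L ∈ Γ, f L ∈ L ∧ barSet S F L ⊆ interior (epsCl S F (f L))

/-- `A* = {𝓛 ∈ Γ : bar(𝓛) ∩ cl ε(A) ≠ ∅}`. -/
def starSet (Γ : Set (Set (Set S))) (A : Set S) : Set Γ :=
  {L : Γ | (barSet S F (L : Set (Set S)) ∩ epsCl S F A).Nonempty}

/-- `A_* = {𝓛 ∈ Γ : bar(𝓛) ⊆ cl ε(A)}`. -/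
def lowStar (Γ : Set (Set (Set S))) (A : Set S) : Set Γ :=
  {L : Γ | barSet S F (L : Set (Set S)) ⊆ epsCl S F A}

/-- The `τ*` quotient topology on `Γ`. -/
def tauStar (Γ : Set (Set (Set S))) : TopologicalSpace Γ :=
  TopologicalSpace.generateFrom {U | ∃ A ∈ ZSet S F, U = (starSet S F Γ A)ᶜ}

/-- The `τ_*` quotient topology on `Γ`. -/
def tauLow (Γ : Set (Set (Set S))) : TopologicalSpace Γ :=
  TopologicalSpace.generateFrom {U | ∃ A ∈ ZSet S F, U = (lowStar S F Γ A)ᶜ}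

/-- `Γ` is a quotient of `S^F`: conditions (a) and (b) of Theorem 3.9. -/
def IsQuotientOf (Γ : Set (Set (Set S))) : Prop :=
  (∀ L ∈ Γ, IsPure S F L) ∧
  (∀ f : Set (Set S) → Set S, IsTCF S F Γ f →
    ∃ 𝓕 : Finset (Set (Set S)), ↑𝓕 ⊆ Γ ∧
      (Set.univ : Set (specF S F)) = ⋃ L ∈ 𝓕, interior (epsCl S F (f L))) ∧
  (∀ L ∈ Γ, ∀ K ∈ Γ, L ≠ K →
    ∃ A ∈ circA S F L, ∃ B ∈ circA S F K, ∀ C ∈ Γ,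
      (∀ H ∈ ZSet S F, (interior (epsCl S F A))ᶜ ⊆ interior (epsCl S F H) → H ∈ C) ∨
      (∀ T ∈ ZSet S F, (interior (epsCl S F B))ᶜ ⊆ interior (epsCl S F T) → T ∈ C))

/-- The defining property of the map `γ : S^F → Γ` sending `p̃` to the unique member of `Γ`
contained in `p̃`. -/
def IsGamma (Γ : Set (Set (Set S))) (γ : specF S F → Γ) : Prop :=
  ∀ (μ : specF S F) (p : Set (Set S)), p ∈ zUltra S F → core S F p = {μ} →
    (γ μ : Set (Set S)) ⊆ tilde S F p

/-- The defining property of the multiplication of `S^F`: `(μν)(f) = μ(T_ν f)` where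
`(T_ν f)(s) = ν(L_s f)`. -/
def IsSpecMul (mul : specF S F → specF S F → specF S F) : Prop :=
  ∀ (μ ν : specF S F) (f : S →ᵇ ℂ) (hf : f ∈ F.carrier) (g : S →ᵇ ℂ) (hg : g ∈ F.carrier),
    (∀ s : S, g s = ν ⟨f.compContinuous (lamC S hl s), F.leftInvariant s f hf⟩) →
    mul μ ν ⟨f, hf⟩ = μ ⟨g, hg⟩

/-- `LMC(S)`, as a subset of `CB(S)`. -/
def LMCset (hl : ∀ s : S, Continuous (fun t => s * t)) : Set (S →ᵇ ℂ) :=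
  {f | ∀ μ : characterSpace ℂ (S →ᵇ ℂ),
    Continuous fun s : S => μ (f.compContinuous (lamC S hl s))}


section AuxProofs

set_option linter.unusedSectionVars false
set_option synthInstance.maxHeartbeats 1000000
set_option maxHeartbeats 1000000

/-- `F` is a commutative unital C*-algebra. -/
instance (F : MAdmissible S hl) : CommCStarAlgebra F.carrier :=
  haveI : IsClosed (F.carrier : Set (S →ᵇ ℂ)) := F.isClosed'
  StarSubalgebra.commCStarAlgebra F.carrier

instance (F : MAdmissible S hl) : CompactSpace (specF S F) := inferInstance

instance (F : MAdmissible S hl) : T2Space (specF S F) := inferInstance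

instance (F : MAdmissible S hl) : NormalSpace (specF S F) := inferInstance

theorem eps_apply (s : S) (f : F.carrier) : epsF S F s f = (f : S →ᵇ ℂ) s :=
  congrFun (WeakDual.CharacterSpace.equivAlgHom_symm_coe (evalHom S F s)) f

theorem exists_gelfand_rep (ψ : C(specF S F, ℂ)) :
    ∃ f : F.carrier, ∀ ν : specF S F, ν f = ψ ν := by
  obtain ⟨f, hf⟩ := (gelfandTransform_bijective (A := F.carrier)).2 ψ
  refine ⟨f, fun ν => ?_⟩
  rw [← hf]
  exact (gelfandTransform_apply_apply ℂ F.carrier f ν).symm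

theorem ZSet.univ_mem : Set.univ ∈ ZSet S F := by
  refine ⟨0, zero_mem _, ?_⟩
  ext s
  simp

theorem ZSet.inter_mem {A B : Set S} (hA : A ∈ ZSet S F) (hB : B ∈ ZSet S F) :
    A ∩ B ∈ ZSet S F := by
  obtain ⟨f, hf, rfl⟩ := hA
  obtain ⟨g, hg, rfl⟩ := hB
  refine ⟨star f * f + star g * g,
    add_mem (mul_mem (star_mem hf) hf) (mul_mem (star_mem hg) hg), ?_⟩
  ext s
  have hval : (star f * f + star g * g) s
      = (starRingEnd ℂ) (f s) * f s + (starRingEnd ℂ) (g s) * g s := rfl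
  simp only [Set.mem_inter_iff, Set.mem_setOf_eq, hval,
    ← Complex.normSq_eq_conj_mul_self, ← Complex.ofReal_add, Complex.ofReal_eq_zero,
    add_eq_zero_iff_of_nonneg (Complex.normSq_nonneg _) (Complex.normSq_nonneg _),
    Complex.normSq_eq_zero]

theorem isClosed_epsCl (A : Set S) : IsClosed (epsCl S F A) := isClosed_closure

theorem epsCl_mono {A B : Set S} (h : A ⊆ B) : epsCl S F A ⊆ epsCl S F B :=
  closure_mono (Set.image_mono h)

theorem epsCl_subset_closed {A : Set S} {K : Set (specF S F)} (hK : IsClosed K)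
    (h : ∀ s ∈ A, epsF S F s ∈ K) : epsCl S F A ⊆ K :=
  closure_minimal (by rintro ν ⟨s, hs, rfl⟩; exact h s hs) hK

theorem denseRange_epsF : DenseRange (epsF S F) := by
  rw [denseRange_iff_closure_range]
  by_contra h
  obtain ⟨μ, hμ⟩ : ∃ μ : specF S F, μ ∉ closure (Set.range (epsF S F)) := by
    rw [← Set.ne_univ_iff_exists_notMem]; exact h
  obtain ⟨φ, hφ0, hφ1, -⟩ := exists_continuous_zero_one_of_isClosed isClosed_closure
    isClosed_singleton (Set.disjoint_singleton_right.mpr hμ)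
  obtain ⟨f, hf⟩ := exists_gelfand_rep S F
    ⟨fun ν => ((φ ν : ℝ) : ℂ), Complex.continuous_ofReal.comp φ.continuous⟩
  have hf0 : f = 0 := by
    refine Subtype.ext ?_
    have : (f : S →ᵇ ℂ) = 0 := by
      ext s
      have h1 : (f : S →ᵇ ℂ) s = ((φ (epsF S F s) : ℝ) : ℂ) := by
        rw [← eps_apply S F s f]; exact hf (epsF S F s)
      have h2 : φ (epsF S F s) = 0 := hφ0 (subset_closure (Set.mem_range_self s))
      simp [h1, h2]
    simpa using this
  have h2 : φ μ = 1 := hφ1 rfl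
  have h3 := hf μ
  rw [hf0, map_zero] at h3
  simp only [ContinuousMap.coe_mk] at h3
  rw [h2] at h3
  have h4 : (1:ℂ) = 0 := by simpa using h3.symm
  exact one_ne_zero h4

theorem isOpen_subset_epsCl {U : Set (specF S F)} (hU : IsOpen U) :
    U ⊆ epsCl S F (epsF S F ⁻¹' U) := by
  intro ν hν
  show ν ∈ closure _
  rw [mem_closure_iff]
  intro o ho hνo
  obtain ⟨x, hx⟩ := (denseRange_epsF S F).exists_mem_open (ho.inter hU) ⟨ν, hνo, hν⟩
  exact ⟨epsF S F x, hx.1, Set.mem_image_of_mem _ hx.2⟩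

theorem geSet_mem_ZSet (φ : C(specF S F, ℝ)) (c : ℝ) :
    {s : S | c ≤ φ (epsF S F s)} ∈ ZSet S F := by
  obtain ⟨f, hf⟩ := exists_gelfand_rep S F
    ⟨fun ν => ((max (c - φ ν) 0 : ℝ) : ℂ),
      Complex.continuous_ofReal.comp ((continuous_const.sub φ.continuous).max continuous_const)⟩
  refine ⟨(f : S →ᵇ ℂ), f.2, ?_⟩
  ext s
  have h1 : (f : S →ᵇ ℂ) s = ((max (c - φ (epsF S F s)) 0 : ℝ) : ℂ) := by
    rw [← eps_apply S F s f]; exact hf (epsF S F s)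
  simp only [Set.mem_setOf_eq, h1, Complex.ofReal_eq_zero, max_eq_right_iff, sub_nonpos]

theorem leSet_mem_ZSet (φ : C(specF S F, ℝ)) (c : ℝ) :
    {s : S | φ (epsF S F s) ≤ c} ∈ ZSet S F := by
  obtain ⟨f, hf⟩ := exists_gelfand_rep S F
    ⟨fun ν => ((max (φ ν - c) 0 : ℝ) : ℂ),
      Complex.continuous_ofReal.comp ((φ.continuous.sub continuous_const).max continuous_const)⟩
  refine ⟨(f : S →ᵇ ℂ), f.2, ?_⟩
  ext s
  have h1 : (f : S →ᵇ ℂ) s = ((max (φ (epsF S F s) - c) 0 : ℝ) : ℂ) := by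
    rw [← eps_apply S F s f]; exact hf (epsF S F s)
  simp only [Set.mem_setOf_eq, h1, Complex.ofReal_eq_zero, max_eq_right_iff, sub_nonpos]

theorem mem_epsCl_inter {A : Set S} {μ : specF S F} (φ : C(specF S F, ℝ)) {c : ℝ}
    (hμA : μ ∈ epsCl S F A) (hφ : c < φ μ) :
    μ ∈ epsCl S F (A ∩ {s : S | c ≤ φ (epsF S F s)}) := by
  show μ ∈ closure _
  rw [mem_closure_iff]
  intro o ho hμo
  have hμA' : μ ∈ closure (epsF S F '' A) := hμA
  rw [mem_closure_iff] at hμA'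
  obtain ⟨ν, hνmem, hνim⟩ := hμA' (o ∩ φ ⁻¹' Set.Ioi c)
    (ho.inter (isOpen_Ioi.preimage φ.continuous)) ⟨hμo, hφ⟩
  obtain ⟨s, hsA, rfl⟩ := hνim
  have hc : c < φ (epsF S F s) := hνmem.2
  exact ⟨_, hνmem.1, Set.mem_image_of_mem _ ⟨hsA, le_of_lt hc⟩⟩

theorem exists_disjoint_mem {p : Set (Set S)} {μ : specF S F}
    (hp : IsZFilter S F p) (hpμ : ∀ A ∈ p, μ ∈ epsCl S F A)
    (hmax : ∀ q, IsZFilter S F q → (∀ B ∈ q, μ ∈ epsCl S F B) → p ⊆ q → q ⊆ p)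
    {Z : Set S} (hμZ : μ ∉ epsCl S F Z) :
    ∃ C ∈ p, C ∩ Z = ∅ := by
  obtain ⟨φ, hφ0, hφ1, -⟩ := exists_continuous_zero_one_of_isClosed (isClosed_epsCl S F Z)
    isClosed_singleton (Set.disjoint_singleton_right.mpr hμZ)
  set C := {s : S | (1:ℝ)/2 ≤ φ (epsF S F s)} with hCdef
  have hCZ : C ∩ Z = ∅ := by
    ext s
    simp only [Set.mem_inter_iff, Set.mem_empty_iff_false, iff_false, not_and]
    intro hsC hsZ
    have h0 : φ (epsF S F s) = 0 := hφ0 (subset_closure (Set.mem_image_of_mem _ hsZ))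
    rw [hCdef] at hsC
    simp only [Set.mem_setOf_eq, h0] at hsC
    linarith
  have hμφ : φ μ = 1 := hφ1 rfl
  have hkey : ∀ A ∈ p, μ ∈ epsCl S F (A ∩ C) := fun A hA =>
    mem_epsCl_inter S F φ (hpμ A hA) (by rw [hμφ]; norm_num)
  set p' := {B | B ∈ ZSet S F ∧ ∃ A ∈ p, A ∩ C ⊆ B} with hp'def
  have hCZs : C ∈ ZSet S F := geSet_mem_ZSet S F φ _
  have hCp' : C ∈ p' := ⟨hCZs, Set.univ, hp.2.2.1, fun s hs => hs.2⟩
  have hpp' : p ⊆ p' := fun A hA => ⟨hp.1 hA, A, hA, fun s hs => hs.1⟩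
  have hp'F : IsZFilter S F p' := by
    refine ⟨fun B hB => hB.1, ?_, hpp' hp.2.2.1, ?_, ?_⟩
    · rintro ⟨-, A, hA, hsub⟩
      have h1 := hkey A hA
      have hempty : A ∩ C = ∅ := Set.subset_empty_iff.mp hsub
      rw [hempty] at h1
      simp only [epsCl, Set.image_empty, closure_empty, Set.mem_empty_iff_false] at h1
    · rintro B1 ⟨hB1, A1, hA1, h1⟩ B2 ⟨hB2, A2, hA2, h2⟩
      exact ⟨ZSet.inter_mem S F hB1 hB2, A1 ∩ A2, hp.2.2.2.1 _ hA1 _ hA2,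
        fun s hs => ⟨h1 ⟨hs.1.1, hs.2⟩, h2 ⟨hs.1.2, hs.2⟩⟩⟩
    · rintro B ⟨-, A, hA, h1⟩ B' hB' hBB'
      exact ⟨hB', A, hA, fun s hs => hBB' (h1 hs)⟩
  have hp'μ : ∀ B ∈ p', μ ∈ epsCl S F B := by
    rintro B ⟨-, A, hA, hsub⟩
    exact epsCl_mono S F hsub (hkey A hA)
  exact ⟨C, hmax p' hp'F hp'μ hpp' hCp', hCZ⟩

theorem inter_subset_barSet {𝒜 : Set (Set S)} (h𝒜 : IsZFilter S F 𝒜) :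
    (⋂ A ∈ 𝒜, epsCl S F A) ⊆ barSet S F 𝒜 := by
  intro μ hμmem
  have hμ : ∀ A ∈ 𝒜, μ ∈ epsCl S F A := Set.mem_iInter₂.mp hμmem
  set P := {q | IsZFilter S F q ∧ 𝒜 ⊆ q ∧ ∀ B ∈ q, μ ∈ epsCl S F B} with hPdef
  have hzorn := zorn_subset_nonempty P ?_ 𝒜 ⟨h𝒜, subset_rfl, hμ⟩
  case refine_1 =>
    rintro c hcP hchain ⟨q0, hq0⟩
    refine ⟨⋃₀ c, ⟨⟨?_, ?_, ?_, ?_, ?_⟩, ?_, ?_⟩, fun s hs => Set.subset_sUnion_of_mem hs⟩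
    · rintro B ⟨q, hq, hB⟩; exact (hcP hq).1.1 hB
    · rintro ⟨q, hq, hB⟩; exact (hcP hq).1.2.1 hB
    · exact ⟨q0, hq0, (hcP hq0).1.2.2.1⟩
    · rintro A ⟨qa, hqa, hA⟩ B ⟨qb, hqb, hB⟩
      rcases hchain.total hqa hqb with hle | hle
      · exact ⟨qb, hqb, (hcP hqb).1.2.2.2.1 _ (hle hA) _ hB⟩
      · exact ⟨qa, hqa, (hcP hqa).1.2.2.2.1 _ hA _ (hle hB)⟩
    · rintro A ⟨qa, hqa, hA⟩ B hB hAB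
      exact ⟨qa, hqa, (hcP hqa).1.2.2.2.2 _ hA _ hB hAB⟩
    · exact fun A hA => ⟨q0, hq0, (hcP hq0).2.1 hA⟩
    · rintro B ⟨q, hq, hB⟩; exact (hcP hq).2.2 _ hB
  obtain ⟨p, h𝒜p, hpmax⟩ := hzorn
  obtain ⟨hpF, -, hpμ⟩ := hpmax.1
  have hmax' : ∀ q, IsZFilter S F q → (∀ B ∈ q, μ ∈ epsCl S F B) → p ⊆ q → q ⊆ p :=
    fun q h1 h2 hpq => hpmax.2 ⟨h1, h𝒜p.trans hpq, h2⟩ hpq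
  have hUltra : p ∈ zUltra S F := by
    refine ⟨hpF, fun q hq hpq => ?_⟩
    refine Set.Subset.antisymm ?_ hpq
    have hqμ : ∀ Z ∈ q, μ ∈ epsCl S F Z := by
      intro Z hZ
      by_contra hμZ
      obtain ⟨C, hCp, hCZ⟩ := exists_disjoint_mem S F hpF hpμ hmax' hμZ
      have hmem : C ∩ Z ∈ q := hq.2.2.2.1 _ (hpq hCp) _ hZ
      rw [hCZ] at hmem
      exact hq.2.1 hmem
    exact hmax' q hq hqμ hpq
  have hcore : core S F p = {μ} := by
    apply Set.Subset.antisymm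
    · intro ν hν
      have hν' : ∀ A ∈ p, ν ∈ epsCl S F A := Set.mem_iInter₂.mp hν
      rw [Set.mem_singleton_iff]
      by_contra hne
      obtain ⟨φ, hφ0, hφ1, -⟩ := exists_continuous_zero_one_of_isClosed
        (isClosed_singleton (x := μ)) (isClosed_singleton (x := ν))
        (by rwa [Set.disjoint_singleton, ne_comm] at *)
      have hμD : μ ∉ epsCl S F {s : S | (1:ℝ)/2 ≤ φ (epsF S F s)} := by
        intro hmem
        have hsub : epsCl S F {s : S | (1:ℝ)/2 ≤ φ (epsF S F s)}
            ⊆ φ ⁻¹' Set.Ici ((1:ℝ)/2) :=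
          epsCl_subset_closed S F (isClosed_Ici.preimage φ.continuous) (fun s hs => hs)
        have h1 : (1:ℝ)/2 ≤ φ μ := hsub hmem
        have h2 : φ μ = 0 := hφ0 rfl
        rw [h2] at h1
        linarith
      obtain ⟨C, hCp, hCD⟩ := exists_disjoint_mem S F hpF hpμ hmax' hμD
      have hνC : ν ∈ epsCl S F C := hν' C hCp
      have hsub2 : epsCl S F C ⊆ φ ⁻¹' Set.Iic ((1:ℝ)/2) := by
        refine epsCl_subset_closed S F (isClosed_Iic.preimage φ.continuous) (fun s hs => ?_)
        have hnot : s ∉ {s : S | (1:ℝ)/2 ≤ φ (epsF S F s)} := fun hmem =>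
          Set.eq_empty_iff_forall_notMem.mp hCD s ⟨hs, hmem⟩
        simp only [Set.mem_setOf_eq, not_le] at hnot
        exact le_of_lt hnot
      have h3 : φ ν ≤ (1:ℝ)/2 := hsub2 hνC
      have h4 : φ ν = 1 := hφ1 rfl
      rw [h4] at h3
      linarith
    · rw [Set.singleton_subset_iff]
      exact Set.mem_iInter₂.mpr hpμ
  exact ⟨p, hUltra, h𝒜p, hcore⟩

theorem barSet_subset_epsCl {𝒜 : Set (Set S)} {A : Set S} (hA : A ∈ 𝒜) :
    barSet S F 𝒜 ⊆ epsCl S F A := by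
  rintro μ ⟨p, hp, h𝒜p, hcore⟩
  have hμ : μ ∈ core S F p := by rw [hcore]; rfl
  exact Set.mem_iInter₂.mp hμ A (h𝒜p hA)

end AuxProofs

/-- Lemma 2.8 (1). -/
theorem statement10
    (hr : ∀ s : S, Continuous (fun t => t * s))
    (𝒜 : Set (Set S)) (h𝒜 : IsZFilter S F 𝒜) :
    barSet S F 𝒜 = ⋂ A ∈ circA S F 𝒜, interior (epsCl S F A) ∧
      barSet S F 𝒜 = ⋂ A ∈ circA S F 𝒜, epsCl S F A ∧
      barSet S F 𝒜 = ⋂ A ∈ 𝒜, epsCl S F A := by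
  have hbar3 : barSet S F 𝒜 ⊆ ⋂ A ∈ 𝒜, epsCl S F A :=
    Set.subset_iInter₂ fun A hA => barSet_subset_epsCl S F hA
  have h1 : barSet S F 𝒜 ⊆ ⋂ A ∈ circA S F 𝒜, interior (epsCl S F A) :=
    Set.subset_iInter₂ fun A hA => hA.2
  have h2 : (⋂ A ∈ circA S F 𝒜, interior (epsCl S F A))
      ⊆ ⋂ A ∈ circA S F 𝒜, epsCl S F A :=
    Set.iInter₂_mono fun A _ => interior_subset
  have h3 : (⋂ A ∈ circA S F 𝒜, epsCl S F A) ⊆ ⋂ A ∈ 𝒜, epsCl S F A := by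
    intro μ hμmem
    have hμ : ∀ A ∈ circA S F 𝒜, μ ∈ epsCl S F A := Set.mem_iInter₂.mp hμmem
    refine Set.mem_iInter₂.mpr fun A hA => ?_
    by_contra hμA
    obtain ⟨φ, hφ0, hφ1, -⟩ := exists_continuous_zero_one_of_isClosed
      (isClosed_epsCl S F A) isClosed_singleton (Set.disjoint_singleton_right.mpr hμA)
    set C := {s : S | φ (epsF S F s) ≤ (1:ℝ)/2} with hCdef
    have hCZ : C ∈ ZSet S F := leSet_mem_ZSet S F φ _
    have hAC : A ⊆ C := by
      intro s hs
      have h0 : φ (epsF S F s) = 0 := hφ0 (subset_closure (Set.mem_image_of_mem _ hs))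
      rw [hCdef]
      simp only [Set.mem_setOf_eq, h0]
      norm_num
    have hC𝒜 : C ∈ 𝒜 := h𝒜.2.2.2.2 A hA C hCZ hAC
    have hCcirc : C ∈ circA S F 𝒜 := by
      refine ⟨hC𝒜, fun κ hκ => ?_⟩
      have hκA : κ ∈ epsCl S F A := barSet_subset_epsCl S F hA hκ
      have hκ0 : φ κ = 0 := by
        have hsub : epsCl S F A ⊆ φ ⁻¹' {0} :=
          epsCl_subset_closed S F ((isClosed_singleton (x := (0:ℝ))).preimage φ.continuous)
            (fun s hs => hφ0 (subset_closure (Set.mem_image_of_mem _ hs)))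
        exact hsub hκA
      have hUopen : IsOpen (φ ⁻¹' Set.Iio ((1:ℝ)/2)) := isOpen_Iio.preimage φ.continuous
      have hUsub : φ ⁻¹' Set.Iio ((1:ℝ)/2) ⊆ epsCl S F C := by
        refine (isOpen_subset_epsCl S F hUopen).trans (epsCl_mono S F ?_)
        intro s hs
        have hlt : φ (epsF S F s) < (1:ℝ)/2 := hs
        exact le_of_lt hlt
      have hκU : κ ∈ φ ⁻¹' Set.Iio ((1:ℝ)/2) := by
        simp only [Set.mem_preimage, Set.mem_Iio, hκ0]
        norm_num
      exact interior_maximal hUsub hUopen hκU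
    have hμC : μ ∈ epsCl S F C := hμ C hCcirc
    have hle : φ μ ≤ (1:ℝ)/2 :=
      epsCl_subset_closed S F (K := φ ⁻¹' Set.Iic ((1:ℝ)/2))
        (isClosed_Iic.preimage φ.continuous) (fun s hs => hs) hμC
    have hφμ : φ μ = 1 := hφ1 rfl
    rw [hφμ] at hle
    linarith
  have h4 : (⋂ A ∈ 𝒜, epsCl S F A) ⊆ barSet S F 𝒜 := inter_subset_barSet S F h𝒜
  have e3 : barSet S F 𝒜 = ⋂ A ∈ 𝒜, epsCl S F A := Set.Subset.antisymm hbar3 h4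
  refine ⟨Set.Subset.antisymm h1 ((h2.trans h3).trans h4), Set.Subset.antisymm (h1.trans h2) (h3.trans h4), e3⟩

end
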